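/- Let Ω ⊆ ℝ² be a nonempty open convex set and let w = (w₁, w₂) : ℝ² → ℝ² be continuously differentiable on Ω. Then the deviatoric symmetric gradient of w vanishes identically on Ω (i.e. ∂_i w_j(x) + ∂_j w_i(x) − (2/3)(∂₁w₁(x) + ∂₂w₂(x))·δ_ij = 0 for all x ∈ Ω and all i, j ∈ {1,2}) if and only if there exist constants k₁, k₂, k₃ ∈ ℝ such that w(x₁, x₂) = (k₁·x₂ + k₂, −k₁·x₁ + k₃) for all (x₁, x₂) ∈ Ω. -/

import Mathlib

open Real


noncomputable def Tk (k : ℝ) : (Fin 2 → ℝ) →L[ℝ] (Fin 2 → ℝ) :=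
  LinearMap.toContinuousLinearMap (Matrix.mulVecLin (Matrix.of ![![0,k],![-k,0]]))

lemma Tk_apply (k : ℝ) (v : Fin 2 → ℝ) : Tk k v = ![k * v 1, -k * v 0] := by
  funext j
  fin_cases j <;>
    simp [Tk, Matrix.mulVecLin, Matrix.mulVec, dotProduct, Fin.sum_univ_two]

lemma affine_hasFDerivAt (k : ℝ) (c : Fin 2 → ℝ) (x : Fin 2 → ℝ) :
    HasFDerivAt (fun x : Fin 2 → ℝ => ![k * x 1 + c 0, -k * x 0 + c 1]) (Tk k) x := by
  have h : (fun x : Fin 2 → ℝ => ![k * x 1 + c 0, -k * x 0 + c 1])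
      = fun x => Tk k x + c := by
    funext y j
    fin_cases j <;> simp [Tk_apply]
  rw [h]
  exact (Tk k).hasFDerivAt.add_const c

lemma line_hasDerivAt (w : (Fin 2 → ℝ) → (Fin 2 → ℝ)) (x : Fin 2 → ℝ) (i : Fin 2)
    (hw : DifferentiableAt ℝ w x) (j : Fin 2) :
    HasDerivAt (fun t => w (Function.update x i t) j) (fderiv ℝ w x (Pi.single i 1) j) (x i) := by
  have hc : ∀ t : ℝ, Function.update x i t = x + (t - x i) • (Pi.single i 1 : Fin 2 → ℝ) := by
    intro t
    funext l
    rcases eq_or_ne l i with rfl | hl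
    · simp [Function.update]
    · simp [Function.update_of_ne hl, Pi.single_eq_of_ne hl]
  have h1 : HasDerivAt (fun t : ℝ => Function.update x i t) (Pi.single i 1) (x i) := by
    simp_rw [hc]
    have : HasDerivAt (fun t : ℝ => (t - x i) • (Pi.single i 1 : Fin 2 → ℝ))
        ((1:ℝ) • (Pi.single i 1 : Fin 2 → ℝ)) (x i) :=
      ((hasDerivAt_id (x i)).sub_const (x i)).smul_const _
    simpa using this.const_add x
  have hw' : HasFDerivAt w (fderiv ℝ w x) (Function.update x i (x i)) := by
    rw [Function.update_eq_self]; exact hw.hasFDerivAt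
  have h2 : HasDerivAt (fun t => w (Function.update x i t))
      (fderiv ℝ w x (Pi.single i 1)) (x i) := hw'.comp_hasDerivAt (x i) h1
  exact ((ContinuousLinearMap.proj j : (Fin 2 → ℝ) →L[ℝ] ℝ).hasFDerivAt.comp_hasDerivAt _ h2)

lemma const_seg {f : (Fin 2 → ℝ) → ℝ} {s : Set (Fin 2 → ℝ)} (hs : Convex ℝ s) {i : Fin 2}
    (hdiff : ∀ x ∈ s, DifferentiableAt ℝ f x)
    (hzero : ∀ x ∈ s, fderiv ℝ f x (Pi.single i 1) = 0)
    {y z : Fin 2 → ℝ} (hy : y ∈ s) (hz : z ∈ s) (hyz : ∀ j, j ≠ i → y j = z j) :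
    f y = f z := by
  have hzy : z - y = (z i - y i) • (Pi.single i 1 : Fin 2 → ℝ) := by
    funext j
    rcases eq_or_ne j i with rfl | hj
    · simp
    · simp [Pi.single_eq_of_ne hj, hyz j hj]
  set ψ : ℝ → ℝ := fun t => f (y + t • (z - y)) with hψ
  have hmem : ∀ t ∈ Set.Icc (0:ℝ) 1, y + t • (z - y) ∈ s := fun t ht =>
    hs.add_smul_sub_mem hy hz ht
  have hd : ∀ t ∈ Set.Icc (0:ℝ) 1, HasDerivAt ψ 0 t := by
    intro t ht
    have hc : HasDerivAt (fun t : ℝ => y + t • (z - y)) (z - y) t := by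
      simpa using ((hasDerivAt_id t).smul_const (z - y)).const_add y
    have hD := (hdiff _ (hmem t ht)).hasFDerivAt.comp_hasDerivAt t hc
    have : fderiv ℝ f (y + t • (z - y)) (z - y) = 0 := by
      have hps := hmem t ht
      set p := y + t • (z - y) with hpdef
      rw [hzy, map_smul, hzero p hps]
      simp
    rwa [this] at hD
  have h0 : ψ 1 = ψ 0 := by
    have := constant_of_derivWithin_zero (f := ψ) (a := 0) (b := 1)
      (fun t ht => (hd t ht).differentiableAt.differentiableWithinAt)
      (fun t ht => (hd t (Set.mem_Icc_of_Ico ht)).hasDerivWithinAt.derivWithin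
        (uniqueDiffOn_Icc zero_lt_one t (Set.mem_Icc_of_Ico ht)))
    exact this 1 (by norm_num)
  simpa [hψ] using h0.symm

lemma fderiv_comp_proj {w : (Fin 2 → ℝ) → (Fin 2 → ℝ)} {x : Fin 2 → ℝ}
    (hw : DifferentiableAt ℝ w x) (j : Fin 2) (v : Fin 2 → ℝ) :
    fderiv ℝ (fun y => w y j) x v = fderiv ℝ w x v j := by
  have h := ((ContinuousLinearMap.proj j : (Fin 2 → ℝ) →L[ℝ] ℝ).hasFDerivAt.comp x
    hw.hasFDerivAt).fderiv
  have : fderiv ℝ (fun y => w y j) x =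
      (ContinuousLinearMap.proj j : (Fin 2 → ℝ) →L[ℝ] ℝ).comp (fderiv ℝ w x) := h
  rw [this]
  rfl

lemma diffat_comp_proj {w : (Fin 2 → ℝ) → (Fin 2 → ℝ)} {x : Fin 2 → ℝ}
    (hw : DifferentiableAt ℝ w x) (j : Fin 2) :
    DifferentiableAt ℝ (fun y => w y j) x :=
  ((ContinuousLinearMap.proj j : (Fin 2 → ℝ) →L[ℝ] ℝ).hasFDerivAt.comp x
    hw.hasFDerivAt).differentiableAt

/-- In 2D, the deviatoric symmetric gradient of a `C¹` vector field `w`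
vanishes on a nonempty open convex set `Ω` iff `w` has the form
`(x₁, x₂) ↦ (k₁ x₂ + k₂, −k₁ x₁ + k₃)` on `Ω`. -/
theorem deviatoric_sym_grad_eq_zero_iff_2d
    (Ω : Set (Fin 2 → ℝ)) (hne : Ω.Nonempty) (hopen : IsOpen Ω) (hconv : Convex ℝ Ω)
    (w : (Fin 2 → ℝ) → (Fin 2 → ℝ)) (hw : ContDiffOn ℝ 1 w Ω) :
    (∀ x ∈ Ω, ∀ i j : Fin 2,
        fderiv ℝ w x (Pi.single i 1) j + fderiv ℝ w x (Pi.single j 1) i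
          - (2 / 3) * (fderiv ℝ w x (Pi.single 0 1) 0 + fderiv ℝ w x (Pi.single 1 1) 1)
            * (if i = j then (1 : ℝ) else 0) = 0)
    ↔ ∃ k₁ k₂ k₃ : ℝ, ∀ x ∈ Ω,
        w x = ![k₁ * x 1 + k₂, -k₁ * x 0 + k₃] := by
  constructor
  · intro H
    have hdiff : ∀ x ∈ Ω, DifferentiableAt ℝ w x := fun x hx =>
      (hw.contDiffAt (hopen.mem_nhds hx)).differentiableAt one_ne_zero
    have h00 : ∀ x ∈ Ω, fderiv ℝ w x (Pi.single 0 1) 0 = 0 := by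
      intro x hx
      have h1 := H x hx 0 0
      have h2 := H x hx 1 1
      norm_num at h1 h2
      linarith
    have h11 : ∀ x ∈ Ω, fderiv ℝ w x (Pi.single 1 1) 1 = 0 := by
      intro x hx
      have h1 := H x hx 0 0
      have h2 := H x hx 1 1
      norm_num at h1 h2
      linarith
    have h01 : ∀ x ∈ Ω,
        fderiv ℝ w x (Pi.single 0 1) 1 + fderiv ℝ w x (Pi.single 1 1) 0 = 0 := by
      intro x hx
      have h1 := H x hx 0 1
      norm_num at h1
      linarith
    set g : (Fin 2 → ℝ) → ℝ := fun x => fderiv ℝ w x (Pi.single 1 1) 0 with hg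
    -- local constancy of g
    have key : ∀ p ∈ Ω, ∃ ε > 0, Metric.ball p ε ⊆ Ω ∧
        ∀ x ∈ Metric.ball p ε, g x = g p := by
      intro p hp
      obtain ⟨ε, hε, hball⟩ := Metric.isOpen_iff.1 hopen p hp
      refine ⟨ε, hε, hball, ?_⟩
      have hin : ∀ v : Fin 2 → ℝ, |v 0 - p 0| < ε → |v 1 - p 1| < ε →
          v ∈ Metric.ball p ε := by
        intro v hv0 hv1
        rw [Metric.mem_ball, dist_pi_lt_iff hε]
        intro b
        fin_cases b
        · rw [Real.dist_eq]; exact hv0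
        · rw [Real.dist_eq]; exact hv1
      have hout : ∀ v ∈ Metric.ball p ε, ∀ j : Fin 2, |v j - p j| < ε := by
        intro v hv j
        rw [← Real.dist_eq]
        exact lt_of_le_of_lt (dist_le_pi_dist v p j) hv
      have hC0 : ∀ y ∈ Metric.ball p ε, ∀ z ∈ Metric.ball p ε,
          y 1 = z 1 → w y 0 = w z 0 := by
        intro y hy z hz h1
        refine const_seg (convex_ball p ε) (i := 0)
          (fun u hu => diffat_comp_proj (hdiff u (hball hu)) 0)
          (fun u hu => by
            rw [fderiv_comp_proj (hdiff u (hball hu)) 0]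
            exact h00 u (hball hu)) hy hz ?_
        intro j hj
        fin_cases j
        · exact absurd rfl hj
        · exact h1
      have hC1 : ∀ y ∈ Metric.ball p ε, ∀ z ∈ Metric.ball p ε,
          y 0 = z 0 → w y 1 = w z 1 := by
        intro y hy z hz h1
        refine const_seg (convex_ball p ε) (i := 1)
          (fun u hu => diffat_comp_proj (hdiff u (hball hu)) 1)
          (fun u hu => by
            rw [fderiv_comp_proj (hdiff u (hball hu)) 1]
            exact h11 u (hball hu)) hy hz ?_
        intro j hj
        fin_cases j
        · exact h1
        · exact absurd rfl hj
      intro x hxB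
      set q : Fin 2 → ℝ := Function.update x 0 (p 0) with hq
      have hq0 : q 0 = p 0 := Function.update_self _ _ _
      have hq1 : q 1 = x 1 := Function.update_of_ne (by decide) _ _
      have hqB : q ∈ Metric.ball p ε := by
        apply hin
        · rw [hq0]; simpa using hε
        · rw [hq1]; exact hout x hxB 1
      -- step 1 : g x = g q
      have step1 : g x = g q := by
        have hF : HasDerivAt (fun t => w (Function.update x 1 t) 0) (g x) (x 1) :=
          line_hasDerivAt w x 1 (hdiff x (hball hxB)) 0
        have hG : HasDerivAt (fun t => w (Function.update q 1 t) 0) (g q) (q 1) :=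
          line_hasDerivAt w q 1 (hdiff q (hball hqB)) 0
        rw [hq1] at hG
        have hEv : (fun t => w (Function.update x 1 t) 0)
            =ᶠ[nhds (x 1)] (fun t => w (Function.update q 1 t) 0) := by
          have hmem : Metric.ball (p 1) ε ∈ nhds (x 1) :=
            Metric.isOpen_ball.mem_nhds (by
              rw [Metric.mem_ball, Real.dist_eq]; exact hout x hxB 1)
          filter_upwards [hmem] with t ht
          rw [Metric.mem_ball, Real.dist_eq] at ht
          apply hC0
          · apply hin
            · rw [Function.update_of_ne (by decide)]; exact hout x hxB 0
            · rw [Function.update_self]; exact ht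
          · apply hin
            · rw [Function.update_of_ne (by decide), hq0]; simpa using hε
            · rw [Function.update_self]; exact ht
          · rw [Function.update_self, Function.update_self]
        exact hF.unique (hG.congr_of_eventuallyEq hEv)
      -- step 2 : g q = g p
      have step2 : g q = g p := by
        have hF : HasDerivAt (fun t => w (Function.update q 0 t) 1)
            (fderiv ℝ w q (Pi.single 0 1) 1) (q 0) :=
          line_hasDerivAt w q 0 (hdiff q (hball hqB)) 1
        have hG : HasDerivAt (fun t => w (Function.update p 0 t) 1)
            (fderiv ℝ w p (Pi.single 0 1) 1) (p 0) :=
          line_hasDerivAt w p 0 (hdiff p hp) 1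
        rw [hq0] at hF
        have hEv : (fun t => w (Function.update q 0 t) 1)
            =ᶠ[nhds (p 0)] (fun t => w (Function.update p 0 t) 1) := by
          have hmem : Metric.ball (p 0) ε ∈ nhds (p 0) :=
            Metric.isOpen_ball.mem_nhds (Metric.mem_ball_self hε)
          filter_upwards [hmem] with t ht
          rw [Metric.mem_ball, Real.dist_eq] at ht
          apply hC1
          · apply hin
            · rw [Function.update_self]; exact ht
            · rw [Function.update_of_ne (by decide), hq1]; exact hout x hxB 1
          · apply hin
            · rw [Function.update_self]; exact ht
            · rw [Function.update_of_ne (by decide)]; simpa using hε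
          · rw [Function.update_self, Function.update_self]
        have h1 : fderiv ℝ w q (Pi.single 0 1) 1 = fderiv ℝ w p (Pi.single 0 1) 1 :=
          hF.unique (hG.congr_of_eventuallyEq hEv)
        have h2 := h01 q (hball hqB)
        have h3 := h01 p hp
        simp only [hg]
        linarith
      rw [step1, step2]
    -- global constancy
    obtain ⟨p₀, hp₀⟩ := hne
    have hglob : ∀ x ∈ Ω, g x = g p₀ := by
      have hpc : PreconnectedSpace ↥Ω := Subtype.preconnectedSpace hconv.isPreconnected
      have hLC : IsLocallyConstant (fun u : ↥Ω => g u.val) := by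
        rw [IsLocallyConstant.iff_exists_open]
        intro u
        obtain ⟨ε, hε, hball, hcst⟩ := key u.val u.2
        refine ⟨Subtype.val ⁻¹' Metric.ball u.val ε,
          Metric.isOpen_ball.preimage continuous_subtype_val,
          ?_, fun v hv => hcst v.val hv⟩
        exact Metric.mem_ball_self hε
      intro x hx
      exact hLC.apply_eq_of_preconnectedSpace ⟨x, hx⟩ ⟨p₀, hp₀⟩
    set k₁ : ℝ := g p₀ with hk₁
    have hDx : ∀ x ∈ Ω, fderiv ℝ w x = Tk k₁ := by
      intro x hx
      refine ContinuousLinearMap.ext fun v => ?_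
      have hv : v = v 0 • (Pi.single 0 1 : Fin 2 → ℝ) + v 1 • (Pi.single 1 1 : Fin 2 → ℝ) := by
        funext j; fin_cases j <;> simp
      rw [hv, map_add, map_smul, map_smul, map_add, map_smul, map_smul]
      have e00 := h00 x hx
      have e11 := h11 x hx
      have e01 := h01 x hx
      have eg : fderiv ℝ w x (Pi.single 1 1) 0 = k₁ := hglob x hx
      have eD01 : fderiv ℝ w x (Pi.single 0 1) 1 = -k₁ := by linarith
      funext j
      fin_cases j
      · simp [Tk_apply, Pi.add_apply, Pi.smul_apply, smul_eq_mul]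
        rw [e00, eg]; ring
      · simp [Tk_apply, Pi.add_apply, Pi.smul_apply, smul_eq_mul]
        rw [eD01, e11]; ring
    refine ⟨k₁, w p₀ 0 - k₁ * p₀ 1, w p₀ 1 + k₁ * p₀ 0, ?_⟩
    intro x hx
    set F : (Fin 2 → ℝ) → (Fin 2 → ℝ) := fun y => w y - Tk k₁ y with hF
    have hFd : ∀ y ∈ Ω, HasFDerivAt F (0 : (Fin 2 → ℝ) →L[ℝ] (Fin 2 → ℝ)) y := by
      intro y hy
      have := (hdiff y hy).hasFDerivAt.sub (Tk k₁).hasFDerivAt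
      rwa [hDx y hy, sub_self] at this
    have hFx : F x = F p₀ :=
      hconv.is_const_of_fderivWithin_eq_zero
        (fun y hy => (hFd y hy).differentiableAt.differentiableWithinAt)
        (fun y hy => by rw [fderivWithin_of_isOpen hopen hy]; exact (hFd y hy).fderiv)
        hx hp₀
    have h0 := congrFun hFx 0
    have h1 := congrFun hFx 1
    simp only [hF, Pi.sub_apply, Tk_apply] at h0 h1
    funext j
    fin_cases j
    · simp only [Matrix.cons_val_zero] at h0 ⊢
      simp at h0 ⊢
      linarith
    · simp only [Matrix.cons_val_one, Matrix.head_cons] at h1 ⊢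
      simp at h1 ⊢
      linarith
  · rintro ⟨k₁, k₂, k₃, hk⟩ x hx i j
    have hEv : w =ᶠ[nhds x]
        (fun y : Fin 2 → ℝ => ![k₁ * y 1 + (![k₂, k₃]) 0, -k₁ * y 0 + (![k₂, k₃]) 1]) := by
      filter_upwards [hopen.mem_nhds hx] with y hy
      rw [hk y hy]
      simp
    have hfd : fderiv ℝ w x = Tk k₁ :=
      ((affine_hasFDerivAt k₁ ![k₂, k₃] x).congr_of_eventuallyEq hEv).fderiv
    rw [hfd]
    fin_cases i <;> fin_cases j <;> simp [Tk_apply]
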